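/- In the layered DVD gadget with a dictatorship f(x) = x_s, define B_j = {b^ℓ_x : x_s = j} and T_j = {t^ℓ_{x,S} : s ∉ S, x_s = j}. Then for every j ∈ [k], the subgraph induced by all bit-vertices together with the good test-vertices (T_0 ∪ ... ∪ T_{k−1}) \ T_j contains no directed path passing through k test-vertices. -/

import Mathlib

open Finset

/-- The sub-cube `C_{x,S} = {z : z_a = x_a for all a not appearing in S}`. -/
def Cube (k R m : ℕ) (x : Fin R → Fin k) (S : Fin m → Fin R) : Set (Fin R → Fin k) :=
  {z | ∀ a : Fin R, (∀ i, S i ≠ a) → z a = x a}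

/-- `z ⊕ 1`: add `1 (mod k)` to every coordinate. -/
def shiftPt (k R : ℕ) [NeZero k] (z : Fin R → Fin k) : Fin R → Fin k := fun a => z a + 1

/-- Layered bit-vertices `b^ℓ_x`, layers `ℓ = 0,…,L`. -/
abbrev LBitV (k R L : ℕ) := Fin (L + 1) × (Fin R → Fin k)

/-- Layered test-vertices `t^ℓ_{x,S}`, layers `ℓ = 0,…,L-1`. -/
abbrev LTestV (k R m L : ℕ) := Fin L × ((Fin R → Fin k) × (Fin m → Fin R))

/-- Vertices of the layered DVD gadget. -/
abbrev LGadV (k R m L : ℕ) := LBitV k R L ⊕ LTestV k R m L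

/-- Arcs of the layered DVD gadget. -/
def lgadAdj (k R m L : ℕ) [NeZero k] : LGadV k R m L → LGadV k R m L → Prop
  | Sum.inl b, Sum.inr t => (b.1 : ℕ) ≤ (t.1 : ℕ) ∧ b.2 ∈ Cube k R m t.2.1 t.2.2
  | Sum.inr t, Sum.inl b => (t.1 : ℕ) < (b.1 : ℕ) ∧ b.2 ∈ shiftPt k R '' Cube k R m t.2.1 t.2.2
  | _, _ => False

/-- Kept vertices: all bit-vertices, and test-vertices `t^ℓ_{x,S}` with `s ∉ S` and
`x_s ≠ j` (the good test-vertices outside `T_j`). -/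
def lgadKeep (k R m L : ℕ) (s : Fin R) (j : Fin k) : LGadV k R m L → Prop
  | Sum.inl _ => True
  | Sum.inr t => (∀ i, t.2.2 i ≠ s) ∧ t.2.1 s ≠ j

/-- `(a - 1).val + 1 = a.val` for nonzero `a`. -/
lemma fin_sub_one_val {k : ℕ} [NeZero k] (a : Fin k) (ha : a ≠ 0) :
    (a - 1).val + 1 = a.val := by
  have hk : 1 < k := by
    rcases Nat.lt_or_ge 1 k with h | h
    · exact h
    · interval_cases k
      · exact absurd rfl (NeZero.ne 0)
      · exact absurd (Subsingleton.elim a 0) ha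
  have ha' : 1 ≤ a.val := by
    rcases Nat.eq_zero_or_pos a.val with h | h
    · exact absurd (Fin.ext h) ha
    · exact h
  have h1 : (1 : Fin k).val = 1 := Fin.val_one' k |>.trans (Nat.mod_eq_of_lt hk)
  have halt := a.isLt
  rw [Fin.sub_def, h1]
  simp only [Fin.val_mk]
  have h2 : k - 1 + a.val = (a.val - 1) + k := by omega
  rw [h2, Nat.add_mod_right, Nat.mod_eq_of_lt (by omega)]
  omega

section
variable (k R m L : ℕ) [NeZero k] (s : Fin R) (j : Fin k)

lemma chainAB : ∀ p : List (LGadV k R m L),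
    (∀ t : LTestV k R m L, List.Chain (lgadAdj k R m L) (Sum.inr t) p →
      (∀ v ∈ p, lgadKeep k R m L s j v) → lgadKeep k R m L s j (Sum.inr t) →
      (p.countP (fun v => v.isRight)) < (j - t.2.1 s).val) ∧
    (∀ b : LBitV k R L, List.Chain (lgadAdj k R m L) (Sum.inl b) p →
      (∀ v ∈ p, lgadKeep k R m L s j v) →
      (p.countP (fun v => v.isRight)) ≤ (j - b.2 s).val) := by
  intro p
  induction p with
  | nil =>
    refine ⟨fun t _ _ hkt => ?_, fun b _ _ => by simp⟩
    obtain ⟨hS, hne⟩ := hkt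
    have h0 : (j - t.2.1 s) ≠ 0 := fun h => hne (eq_of_sub_eq_zero h).symm
    have := Nat.pos_of_ne_zero (fun (h : (j - t.2.1 s).val = 0) => h0 (Fin.ext (by simp [h])))
    simpa using this
  | cons v rest ih =>
    constructor
    · -- A: chain starting after test vertex t
      intro t hc hkeep hkt
      obtain ⟨hS, hne⟩ := hkt
      have hd0 : (j - t.2.1 s) ≠ 0 := fun h => hne (eq_of_sub_eq_zero h).symm
      have hd : 1 ≤ (j - t.2.1 s).val :=
        Nat.pos_of_ne_zero (fun (h : (j - t.2.1 s).val = 0) => hd0 (Fin.ext (by simp [h])))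
      obtain ⟨h1, hc2⟩ := List.chain_cons.1 hc
      match v, h1 with
      | Sum.inl b, h1 =>
        obtain ⟨z, hz, hzb⟩ := h1.2
        have hb : b.2 s = t.2.1 s + 1 := by
          rw [← hzb]; show z s + 1 = _; rw [hz s hS]
        have hB := ih.2 b hc2 (fun v hv => hkeep v (by simp [hv]))
        have hsub : (j - b.2 s) = (j - t.2.1 s) - 1 := by rw [hb, sub_add_eq_sub_sub]
        have hval1 := fin_sub_one_val (j - t.2.1 s) hd0
        rw [hsub] at hB
        have hcount : ((Sum.inl b : LGadV k R m L) :: rest).countP (fun v => v.isRight)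
            = rest.countP (fun v => v.isRight) := by simp
        rw [hcount]
        omega
    · -- B: chain starting after bit vertex b
      intro b hc hkeep
      obtain ⟨h1, hc2⟩ := List.chain_cons.1 hc
      match v, h1 with
      | Sum.inr t', h1 =>
        have hkt' : lgadKeep k R m L s j (Sum.inr t') := hkeep _ (by simp)
        obtain ⟨hS', hne'⟩ := hkt'
        have hb : b.2 s = t'.2.1 s := h1.2 s hS'
        have hA := ih.1 t' hc2 (fun v hv => hkeep v (by simp [hv])) ⟨hS', hne'⟩
        rw [← hb] at hA
        have hcount : ((Sum.inr t' : LGadV k R m L) :: rest).countP (fun v => v.isRight)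
            = rest.countP (fun v => v.isRight) + 1 := List.countP_cons_of_pos (by rfl)
        rw [hcount]
        omega

end

/-- In the layered DVD gadget with dictator coordinate `s`, for every `j ∈ [k]`, the
subgraph induced by all bit-vertices and the good test-vertices `(T_0 ∪ ⋯ ∪ T_{k-1}) \ T_j`
contains no directed path passing through `k` test-vertices. -/
theorem stmt8 (k R m L : ℕ) [NeZero k] (s : Fin R) (j : Fin k) :
    ∀ p : List (LGadV k R m L), p.Chain' (lgadAdj k R m L) →
      (∀ v ∈ p, lgadKeep k R m L s j v) →
      (p.countP (fun v => v.isRight)) < k := by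
  have hk : 0 < k := Nat.pos_of_ne_zero (NeZero.ne k)
  intro p hc hkeep
  match p, hc with
  | [], _ => simpa using hk
  | Sum.inr t :: rest, hc =>
    have hA := (chainAB k R m L s j rest).1 t hc
      (fun v hv => hkeep v (by simp [hv])) (hkeep _ (by simp))
    have hlt := (j - t.2.1 s).isLt
    have hcount : ((Sum.inr t : LGadV k R m L) :: rest).countP (fun v => v.isRight)
        = rest.countP (fun v => v.isRight) + 1 := List.countP_cons_of_pos (by rfl)
    rw [hcount]
    omega
  | Sum.inl b :: rest, hc =>
    have hB := (chainAB k R m L s j rest).2 b hc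
      (fun v hv => hkeep v (by simp [hv]))
    have hlt := (j - b.2 s).isLt
    have hcount : ((Sum.inl b : LGadV k R m L) :: rest).countP (fun v => v.isRight)
        = rest.countP (fun v => v.isRight) := by simp
    rw [hcount]
    omega
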